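/- Let S be a positive integer, let p̄ be in the probability simplex Δ_S with p̄_s > 0 for all s, let b ∈ ℝ^S with b_s ≥ 0 for all s, and let β ∈ ℝ with min_s b_s < β. Then inf{ Σ_{s=1}^S p̄_s · log(p̄_s / p_s) : p ∈ Δ_S, p_s > 0 for all s, ⟨b, p⟩ ≤ β } = sup{ Σ_{s=1}^S p̄_s · log( 1 + α (b_s − β)/(β − min_{s'} b_{s'}) ) : α ∈ [0, 1) }, where for every α ∈ [0, 1) all arguments of the logarithms on the right-hand side are strictly positive. -/
import Mathlib

open scoped BigOperators

private lemma aux_pos {x β m α : ℝ} (hbm : m ≤ x) (hM : 0 < β - m)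
    (hα0 : 0 ≤ α) (hα1 : α < 1) : 0 < 1 + α * (x - β) / (β - m) := by
  rw [show (1 : ℝ) + α * (x - β) / (β - m) = ((β - m) + α * (x - β)) / (β - m) by
    field_simp]
  apply div_pos _ hM
  nlinarith [mul_nonneg hα0 (sub_nonneg.2 hbm)]

private lemma aux_term {pb p c : ℝ} (hpb : 0 < pb) (hp : 0 < p) (hc : 0 < c) :
    pb * Real.log c ≤ pb * Real.log (pb / p) - (pb - p * c) := by
  have hx : 0 < p * c / pb := by positivity
  have hlog := Real.log_le_sub_one_of_pos hx
  rw [Real.log_div (by positivity) hpb.ne', Real.log_mul hp.ne' hc.ne'] at hlog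
  rw [Real.log_div hpb.ne' hp.ne']
  have h2 : pb * (p * c / pb) = p * c := by field_simp
  nlinarith [mul_le_mul_of_nonneg_left hlog hpb.le]

private lemma aux_e {x c t : ℝ} (hc : c ≠ 0) (ht : t = c - 1) : x / c = x - x * t / c := by
  rw [ht]; field_simp; ring

theorem stmt18 (S : ℕ) (hS : 0 < S)
    (pbar : Fin S → ℝ) (hpbar : pbar ∈ stdSimplex ℝ (Fin S)) (hpos : ∀ s, 0 < pbar s)
    (b : Fin S → ℝ) (hb : ∀ s, 0 ≤ b s)
    (β : ℝ) (hβ : (⨅ s, b s) < β) :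
    (∀ α ∈ Set.Ico (0:ℝ) 1, ∀ s, 0 < 1 + α * (b s - β) / (β - ⨅ s', b s')) ∧
    sInf ((fun p : Fin S → ℝ => ∑ s, pbar s * Real.log (pbar s / p s)) ''
        {p : Fin S → ℝ | p ∈ stdSimplex ℝ (Fin S) ∧ (∀ s, 0 < p s) ∧ ∑ s, b s * p s ≤ β})
      = sSup ((fun α : ℝ =>
            ∑ s, pbar s * Real.log (1 + α * (b s - β) / (β - ⨅ s', b s'))) ''
          Set.Ico (0:ℝ) 1) := by
  have hne : Nonempty (Fin S) := ⟨⟨0, hS⟩⟩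
  set m := ⨅ s, b s with hm
  have hM : 0 < β - m := sub_pos.2 hβ
  have hmle : ∀ s, m ≤ b s := fun s => ciInf_le (Finite.bddBelow_range b) s
  obtain ⟨s0, hs0⟩ : ∃ s0, b s0 = m := by
    obtain ⟨s0, hs0⟩ := Finite.exists_min b
    exact ⟨s0, le_antisymm (le_ciInf hs0) (hmle s0)⟩
  have hsumbar : ∑ s, pbar s = 1 := hpbar.2
  refine ⟨fun α hα s => aux_pos (hmle s) hM hα.1 hα.2, ?_⟩
  -- weak duality
  have weak : ∀ q : Fin S → ℝ, q ∈ stdSimplex ℝ (Fin S) → (∀ s, 0 < q s) →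
      (∑ s, b s * q s ≤ β) → ∀ α, 0 ≤ α → α < 1 →
      (∑ s, pbar s * Real.log (1 + α * (b s - β) / (β - m)))
        ≤ ∑ s, pbar s * Real.log (pbar s / q s) := by
    intro q hq hqpos hqb α hα0 hα1
    have hsumq : ∑ s, q s = 1 := hq.2
    have hpc : ∑ s, q s * (1 + α * (b s - β) / (β - m)) ≤ 1 := by
      have e : ∀ s ∈ Finset.univ, q s * (1 + α * (b s - β) / (β - m))
          = q s + (α / (β - m)) * (b s * q s) - (α / (β - m)) * β * q s := by
        intro s _; field_simp; ring
      rw [Finset.sum_congr rfl e, Finset.sum_sub_distrib, Finset.sum_add_distrib,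
        ← Finset.mul_sum, ← Finset.mul_sum, hsumq]
      have h0 : 0 ≤ α / (β - m) := div_nonneg hα0 hM.le
      nlinarith [mul_le_mul_of_nonneg_left hqb h0]
    have hterms : ∀ s ∈ Finset.univ,
        pbar s * Real.log (1 + α * (b s - β) / (β - m))
          ≤ pbar s * Real.log (pbar s / q s)
            - (pbar s - q s * (1 + α * (b s - β) / (β - m))) :=
      fun s _ => aux_term (hpos s) (hqpos s) (aux_pos (hmle s) hM hα0 hα1)
    have := Finset.sum_le_sum hterms
    rw [Finset.sum_sub_distrib, Finset.sum_sub_distrib, hsumbar] at this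
    linarith
  -- existence of optimal alpha and p with equal values
  have main : ∃ αs ∈ Set.Ico (0:ℝ) 1, ∃ p : Fin S → ℝ,
      (p ∈ stdSimplex ℝ (Fin S) ∧ (∀ s, 0 < p s) ∧ ∑ s, b s * p s ≤ β) ∧
      (∑ s, pbar s * Real.log (pbar s / p s))
        = ∑ s, pbar s * Real.log (1 + αs * (b s - β) / (β - m)) := by
    by_cases hcase : ∑ s, b s * pbar s ≤ β
    · refine ⟨0, ⟨le_refl _, one_pos⟩, pbar, ⟨hpbar, hpos, hcase⟩, ?_⟩
      apply Finset.sum_congr rfl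
      intro s _
      rw [div_self (hpos s).ne', zero_mul, zero_div, add_zero]
    · push_neg at hcase
      set C := ∑ s, pbar s * |b s - β| with hCdef
      have hC0 : 0 ≤ C := Finset.sum_nonneg fun s _ => mul_nonneg (hpos s).le (abs_nonneg _)
      set δ := min (pbar s0 * (β - m) / (C + 1)) 1 with hδdef
      have hδpos : 0 < δ := lt_min (div_pos (mul_pos (hpos s0) hM) (by linarith)) one_pos
      have hδ1 : δ ≤ 1 := min_le_right _ _
      set α₁ := 1 - δ with hα₁def
      have hα₁0 : 0 ≤ α₁ := by simp only [hα₁def]; linarith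
      have hα₁1 : α₁ < 1 := by simp only [hα₁def]; linarith
      -- g(0) > 0
      have hg0 : (∑ s, pbar s * (b s - β) / (1 + (0:ℝ) * (b s - β) / (β - m)))
          = (∑ s, b s * pbar s) - β := by
        have e : ∀ s ∈ Finset.univ, pbar s * (b s - β) / (1 + (0:ℝ) * (b s - β) / (β - m))
            = b s * pbar s - β * pbar s := by
          intro s _; rw [zero_mul, zero_div, add_zero, div_one]; ring
        rw [Finset.sum_congr rfl e, Finset.sum_sub_distrib, ← Finset.mul_sum, hsumbar, mul_one]
      -- g(α₁) < 0
      have hcs0 : 1 + α₁ * (b s0 - β) / (β - m) = δ := by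
        rw [hs0, hα₁def]; field_simp; ring
      have hterm0 : pbar s0 * (b s0 - β) / δ ≤ -(C + 1) := by
        have h1 : δ * (C + 1) ≤ pbar s0 * (β - m) := by
          have h2 := min_le_left (pbar s0 * (β - m) / (C + 1)) 1
          rw [← hδdef, le_div_iff₀ (by positivity : (0:ℝ) < C + 1)] at h2
          exact h2
        rw [hs0, div_le_iff₀ hδpos]
        nlinarith
      have hrest : ∀ s ∈ Finset.univ.erase s0,
          pbar s * (b s - β) / (1 + α₁ * (b s - β) / (β - m)) ≤ pbar s * |b s - β| := by
        intro s _
        have hcpos := aux_pos (hmle s) hM hα₁0 hα₁1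
        rcases le_or_gt β (b s) with h | h
        · have hnum : 0 ≤ pbar s * (b s - β) := mul_nonneg (hpos s).le (by linarith)
          have hc1 : 1 ≤ 1 + α₁ * (b s - β) / (β - m) := by
            have : 0 ≤ α₁ * (b s - β) / (β - m) :=
              div_nonneg (mul_nonneg hα₁0 (by linarith)) hM.le
            linarith
          calc pbar s * (b s - β) / (1 + α₁ * (b s - β) / (β - m))
              ≤ pbar s * (b s - β) := div_le_self hnum hc1
            _ = pbar s * |b s - β| := by rw [abs_of_nonneg (by linarith : (0:ℝ) ≤ b s - β)]
        · have hnum : pbar s * (b s - β) ≤ 0 :=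
            mul_nonpos_of_nonneg_of_nonpos (hpos s).le (by linarith)
          have : pbar s * (b s - β) / (1 + α₁ * (b s - β) / (β - m)) ≤ 0 :=
            div_nonpos_of_nonpos_of_nonneg hnum hcpos.le
          have h2 : 0 ≤ pbar s * |b s - β| := mul_nonneg (hpos s).le (abs_nonneg _)
          linarith
      have hrest_sum : ∑ s ∈ Finset.univ.erase s0, pbar s * |b s - β| ≤ C := by
        rw [hCdef]
        exact Finset.sum_le_sum_of_subset_of_nonneg (Finset.erase_subset _ _)
          (fun s _ _ => mul_nonneg (hpos s).le (abs_nonneg _))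
      have hgα₁ : (∑ s, pbar s * (b s - β) / (1 + α₁ * (b s - β) / (β - m))) < 0 := by
        rw [← Finset.add_sum_erase Finset.univ _ (Finset.mem_univ s0), hcs0]
        have := Finset.sum_le_sum hrest
        linarith
      -- IVT
      have hcont : ContinuousOn
          (fun α => ∑ s, pbar s * (b s - β) / (1 + α * (b s - β) / (β - m)))
          (Set.Icc 0 α₁) := by
        apply continuousOn_finset_sum
        intro s _
        apply ContinuousOn.div continuousOn_const
        · fun_prop
        · intro x hx
          exact (aux_pos (hmle s) hM hx.1 (lt_of_le_of_lt hx.2 hα₁1)).ne'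
      have hmem : (0:ℝ) ∈ Set.Icc
          ((fun α => ∑ s, pbar s * (b s - β) / (1 + α * (b s - β) / (β - m))) α₁)
          ((fun α => ∑ s, pbar s * (b s - β) / (1 + α * (b s - β) / (β - m))) 0) := by
        constructor
        · exact hgα₁.le
        · simp only [hg0]; linarith
      obtain ⟨αs, hαsI, hgαs⟩ := intermediate_value_Icc' hα₁0 hcont hmem
      have hαsIco : αs ∈ Set.Ico (0:ℝ) 1 := ⟨hαsI.1, lt_of_le_of_lt hαsI.2 hα₁1⟩
      have hg' : ∑ s, pbar s * (b s - β) / (1 + αs * (b s - β) / (β - m)) = 0 := hgαs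
      have hcαs : ∀ s, 0 < 1 + αs * (b s - β) / (β - m) :=
        fun s => aux_pos (hmle s) hM hαsIco.1 hαsIco.2
      refine ⟨αs, hαsIco, fun s => pbar s / (1 + αs * (b s - β) / (β - m)), ?_, ?_⟩
      · have hsump : ∑ s, pbar s / (1 + αs * (b s - β) / (β - m)) = 1 := by
          have e : ∀ s ∈ Finset.univ, pbar s / (1 + αs * (b s - β) / (β - m))
              = pbar s - (αs / (β - m)) *
                  (pbar s * (b s - β) / (1 + αs * (b s - β) / (β - m))) := by
            intro s _
            calc pbar s / (1 + αs * (b s - β) / (β - m))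
                = pbar s - pbar s * (αs * (b s - β) / (β - m))
                    / (1 + αs * (b s - β) / (β - m)) :=
                  aux_e (hcαs s).ne' (by ring)
              _ = pbar s - (αs / (β - m)) *
                    (pbar s * (b s - β) / (1 + αs * (b s - β) / (β - m))) := by ring
          rw [Finset.sum_congr rfl e, Finset.sum_sub_distrib, ← Finset.mul_sum, hg',
            hsumbar, mul_zero, sub_zero]
        refine ⟨⟨fun s => (div_pos (hpos s) (hcαs s)).le, hsump⟩,
          fun s => div_pos (hpos s) (hcαs s), ?_⟩
        have e2 : ∀ s ∈ Finset.univ, b s * (pbar s / (1 + αs * (b s - β) / (β - m)))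
            = β * (pbar s / (1 + αs * (b s - β) / (β - m)))
              + pbar s * (b s - β) / (1 + αs * (b s - β) / (β - m)) := by
          intro s _; ring
        rw [Finset.sum_congr rfl e2, Finset.sum_add_distrib, ← Finset.mul_sum, hsump,
          hg', mul_one, add_zero]
      · apply Finset.sum_congr rfl
        intro s _
        congr 1
        rw [div_div_eq_mul_div, mul_comm, mul_div_assoc, div_self (hpos s).ne', mul_one]
  -- assemble
  obtain ⟨αs, hαsI, p, hpfeas, hval⟩ := main
  have hAmem : (∑ s, pbar s * Real.log (pbar s / p s)) ∈
      ((fun p : Fin S → ℝ => ∑ s, pbar s * Real.log (pbar s / p s)) ''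
        {p : Fin S → ℝ | p ∈ stdSimplex ℝ (Fin S) ∧ (∀ s, 0 < p s) ∧ ∑ s, b s * p s ≤ β}) :=
    ⟨p, hpfeas, rfl⟩
  have hBmem : (∑ s, pbar s * Real.log (1 + αs * (b s - β) / (β - m))) ∈
      ((fun α : ℝ => ∑ s, pbar s * Real.log (1 + α * (b s - β) / (β - m))) ''
        Set.Ico (0:ℝ) 1) := ⟨αs, hαsI, rfl⟩
  have hweakAB : ∀ x ∈ ((fun α : ℝ =>
        ∑ s, pbar s * Real.log (1 + α * (b s - β) / (β - m))) '' Set.Ico (0:ℝ) 1),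
      ∀ a ∈ ((fun p : Fin S → ℝ => ∑ s, pbar s * Real.log (pbar s / p s)) ''
        {p : Fin S → ℝ | p ∈ stdSimplex ℝ (Fin S) ∧ (∀ s, 0 < p s) ∧ ∑ s, b s * p s ≤ β}),
      x ≤ a := by
    rintro x ⟨α, hαI, rfl⟩ a ⟨q, ⟨hq1, hq2, hq3⟩, rfl⟩
    exact weak q hq1 hq2 hq3 α hαI.1 hαI.2
  apply le_antisymm
  · calc sInf _ ≤ ∑ s, pbar s * Real.log (pbar s / p s) :=
        csInf_le ⟨_, fun a ha => hweakAB _ hBmem a ha⟩ hAmem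
      _ = ∑ s, pbar s * Real.log (1 + αs * (b s - β) / (β - m)) := hval
      _ ≤ sSup _ := le_csSup ⟨_, fun x hx => hval ▸ hweakAB x hx _ hAmem⟩ hBmem
  · exact le_csInf ⟨_, hAmem⟩ fun a ha => csSup_le ⟨_, hBmem⟩ fun x hx => hweakAB x hx a ha
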